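/- Let n > 12 with 3 | n. For every μ ∈ Φ3^n with t(μ) ≡ 0 (mod 3) and μ ∉ ⟨C,J⟩(4,1) ∪ ⟨J⟩(2,2) ∪ ⟨J⟩ρ, one has D^(n)(μ) > D^(n)((4,1)) > D^(n)((2,2)) > 1. -/

import Mathlib

open scoped Classical
noncomputable section

/-- The set `Φ₃ⁿ` of SU(3) weights at height `n`. -/
def Phi3 (n : ℕ) : Finset (ℤ × ℤ) :=
  (Finset.Icc ((1 : ℤ), (1 : ℤ)) ((n : ℤ), (n : ℤ))).filter (fun l => l.1 + l.2 ≤ (n : ℤ) - 1)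

/-- Triality `t(λ) = λ₁ + 2λ₂`. -/
def tri (l : ℤ × ℤ) : ℤ := l.1 + 2 * l.2

/-- The order-3 simple current `Jλ = (n−λ₁−λ₂, λ₁)`. -/
def Jv (n : ℕ) (l : ℤ × ℤ) : ℤ × ℤ := ((n : ℤ) - l.1 - l.2, l.1)

/-- Conjugation `Cλ = (λ₂, λ₁)`. -/
def Cv (l : ℤ × ℤ) : ℤ × ℤ := (l.2, l.1)

/-- The orbit `⟨J⟩λ = {λ, Jλ, J²λ}`. -/
def orbJ (n : ℕ) (l : ℤ × ℤ) : Finset (ℤ × ℤ) := {l, Jv n l, Jv n (Jv n l)}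

/-- The orbit `⟨C,J⟩λ = {λ, Jλ, J²λ, Cλ, JCλ, J²Cλ}`. -/
def orbCJ (n : ℕ) (l : ℤ × ℤ) : Finset (ℤ × ℤ) := orbJ n l ∪ orbJ n (Cv l)

/-- The SU(3) quantum dimension `D⁽ⁿ⁾(λ)`. -/
def qdim (n : ℕ) (l : ℤ × ℤ) : ℝ :=
  (Real.sin (Real.pi * (l.1 : ℝ) / n) * Real.sin (Real.pi * (l.2 : ℝ) / n) *
      Real.sin (Real.pi * ((l.1 : ℝ) + (l.2 : ℝ)) / n)) /
    (Real.sin (Real.pi / n) ^ 2 * Real.sin (2 * Real.pi / n))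

open Real

namespace SU3Aux

lemma pts2 (B k : ℝ) : sin B * sin (B + k) = (cos k - cos (2*B + k)) / 2 := by
  have h := Real.cos_sub_cos k (2*B + k)
  rw [show (k + (2*B + k)) / 2 = B + k by ring, show (k - (2*B + k)) / 2 = -B by ring,
    Real.sin_neg] at h
  linear_combination -h/2

lemma sin_ge_arc {u v : ℝ} (hu : 0 ≤ u) (huv : u ≤ v) (hv : v ≤ π - u) :
    sin u ≤ sin v := by
  have hπ := Real.pi_pos
  rcases le_total v (π/2) with h | h
  · exact Real.sin_le_sin_of_le_of_le_pi_div_two (by linarith) h huv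
  · rw [← Real.sin_pi_sub v]
    exact Real.sin_le_sin_of_le_of_le_pi_div_two (by linarith) (by linarith) (by linarith)

lemma mono_pair {k B B0 : ℝ} (hk : 0 ≤ k) (h0 : 0 ≤ B0) (hB : B0 ≤ B)
    (hcap : 2*B + k ≤ π) : sin B0 * sin (B0 + k) ≤ sin B * sin (B + k) := by
  rw [pts2, pts2]
  have h1 : cos (2*B + k) ≤ cos (2*B0 + k) :=
    Real.cos_le_cos_of_nonneg_of_le_pi (by linarith) (by linarith) (by linarith)
  linarith

section Cases
variable {x : ℝ} (hx : 0 < x) (hx15 : 15 * x ≤ π)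
include hx hx15

lemma sposk {k : ℝ} (h1 : 0 < k) (h2 : k < 15) : 0 < sin (k * x) := by
  have hπ := Real.pi_pos
  apply Real.sin_pos_of_pos_of_lt_pi (by positivity)
  nlinarith [mul_pos (by linarith : (0:ℝ) < 15 - k) hx]

lemma caseA1 {β : ℝ} (hβ : 7*x ≤ β) (hcap : 2*β + x ≤ π) :
    sin x * sin (4*x) * sin (5*x) < sin x * (sin β * sin (β + x)) := by
  have hπ := Real.pi_pos
  have m : sin (7*x) * sin (7*x + x) ≤ sin β * sin (β + x) :=
    mono_pair hx.le (by linarith) hβ hcap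
  rw [show 7*x + x = 8*x by ring] at m
  have e1 : sin (4*x) * sin (5*x) = (cos x - cos (9*x))/2 := by
    have h := pts2 (4*x) x
    rw [show 4*x + x = 5*x by ring, show 2*(4*x) + x = 9*x by ring] at h
    exact h
  have e2 : sin (7*x) * sin (8*x) = (cos x - cos (15*x))/2 := by
    have h := pts2 (7*x) x
    rw [show 7*x + x = 8*x by ring, show 2*(7*x) + x = 15*x by ring] at h
    exact h
  have hc : cos (15*x) < cos (9*x) :=
    Real.cos_lt_cos_of_nonneg_of_le_pi (by positivity) hx15 (by linarith)
  have strict : sin (4*x) * sin (5*x) < sin (7*x) * sin (8*x) := by rw [e1, e2]; linarith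
  have s1 : 0 < sin x := by have := sposk hx hx15 (k := 1) (by norm_num) (by norm_num); simpa using this
  calc sin x * sin (4*x) * sin (5*x) = sin x * (sin (4*x) * sin (5*x)) := by ring
    _ < sin x * (sin β * sin (β + x)) :=
        mul_lt_mul_of_pos_left (lt_of_lt_of_le strict m) s1

lemma caseA2 {β : ℝ} (hβ : 5*x ≤ β) (hcap : 2*β + 2*x ≤ π) :
    sin x * sin (4*x) * sin (5*x) < sin (2*x) * (sin β * sin (β + 2*x)) := by
  have hπ := Real.pi_pos
  have m : sin (5*x) * sin (5*x + 2*x) ≤ sin β * sin (β + 2*x) :=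
    mono_pair (by linarith) (by linarith) hβ hcap
  rw [show 5*x + 2*x = 7*x by ring] at m
  have e1 : sin x * sin (4*x) = (cos (3*x) - cos (5*x))/2 := by
    have h := pts2 x (3*x)
    rw [show x + 3*x = 4*x by ring, show 2*x + 3*x = 5*x by ring] at h
    exact h
  have e2 : sin (2*x) * sin (7*x) = (cos (5*x) - cos (9*x))/2 := by
    have h := pts2 (2*x) (5*x)
    rw [show 2*x + 5*x = 7*x by ring, show 2*(2*x) + 5*x = 9*x by ring] at h
    exact h
  have hadd : cos (3*x) + cos (9*x) = 2 * cos (6*x) * cos (3*x) := by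
    have h := Real.cos_add_cos (3*x) (9*x)
    rw [show (3*x + 9*x)/2 = 6*x by ring, show (3*x - 9*x)/2 = -(3*x) by ring,
      Real.cos_neg] at h
    exact h
  have h60 : 0 ≤ cos (6*x) := by
    apply Real.cos_nonneg_of_mem_Icc
    constructor <;> [linarith; linarith]
  have h31 : cos (3*x) < 1 := by
    have := Real.cos_lt_cos_of_nonneg_of_le_pi (le_refl 0) (by linarith : 3*x ≤ π)
      (by linarith : (0:ℝ) < 3*x)
    simpa using this
  have h65 : cos (6*x) < cos (5*x) :=
    Real.cos_lt_cos_of_nonneg_of_le_pi (by positivity) (by linarith) (by linarith)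
  have key : sin x * sin (4*x) < sin (2*x) * sin (7*x) := by
    rw [e1, e2]
    nlinarith [mul_nonneg h60 (by linarith : (0:ℝ) ≤ 1 - cos (3*x))]
  have s5 : 0 < sin (5*x) := sposk hx hx15 (by norm_num) (by norm_num)
  have s2 : 0 < sin (2*x) := sposk hx hx15 (by norm_num) (by norm_num)
  calc sin x * sin (4*x) * sin (5*x) = (sin x * sin (4*x)) * sin (5*x) := by ring
    _ < (sin (2*x) * sin (7*x)) * sin (5*x) := mul_lt_mul_of_pos_right key s5
    _ = sin (2*x) * (sin (5*x) * sin (7*x)) := by ring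
    _ ≤ sin (2*x) * (sin β * sin (β + 2*x)) := mul_le_mul_of_nonneg_left m s2.le

lemma caseA4 {β : ℝ} (hβ : 4*x ≤ β) (hcap : 2*β + 4*x ≤ π) :
    sin x * sin (4*x) * sin (5*x) < sin (4*x) * (sin β * sin (β + 4*x)) := by
  have hπ := Real.pi_pos
  have m : sin (4*x) * sin (4*x + 4*x) ≤ sin β * sin (β + 4*x) :=
    mono_pair (by linarith) (by linarith) hβ hcap
  rw [show 4*x + 4*x = 8*x by ring] at m
  have e1 : sin x * sin (5*x) = (cos (4*x) - cos (6*x))/2 := by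
    have h := pts2 x (4*x)
    rw [show x + 4*x = 5*x by ring, show 2*x + 4*x = 6*x by ring] at h
    exact h
  have e2 : sin (4*x) * sin (8*x) = (cos (4*x) - cos (12*x))/2 := by
    have h := pts2 (4*x) (4*x)
    rw [show 4*x + 4*x = 8*x by ring, show 2*(4*x) + 4*x = 12*x by ring] at h
    exact h
  have hc : cos (12*x) < cos (6*x) :=
    Real.cos_lt_cos_of_nonneg_of_le_pi (by positivity) (by linarith) (by linarith)
  have strict : sin x * sin (5*x) < sin (4*x) * sin (8*x) := by rw [e1, e2]; linarith
  have s4 : 0 < sin (4*x) := sposk hx hx15 (by norm_num) (by norm_num)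
  calc sin x * sin (4*x) * sin (5*x) = (sin x * sin (5*x)) * sin (4*x) := by ring
    _ < (sin (4*x) * sin (8*x)) * sin (4*x) := mul_lt_mul_of_pos_right strict s4
    _ = sin (4*x) * (sin (4*x) * sin (8*x)) := by ring
    _ ≤ sin (4*x) * (sin β * sin (β + 4*x)) := mul_le_mul_of_nonneg_left m s4.le

lemma caseA3 {β : ℝ} (hβ : 3*x ≤ β) (hcap : 2*β + 3*x ≤ π) :
    sin x * sin (4*x) * sin (5*x) < sin (3*x) * (sin β * sin (β + 3*x)) := by
  have hπ := Real.pi_pos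
  have m : sin (3*x) * sin (3*x + 3*x) ≤ sin β * sin (β + 3*x) :=
    mono_pair (by linarith) (by linarith) hβ hcap
  rw [show 3*x + 3*x = 6*x by ring] at m
  have eA : sin (3*x) * sin (6*x) = (cos (3*x) - cos (9*x))/2 := by
    have h := pts2 (3*x) (3*x)
    rw [show 3*x + 3*x = 6*x by ring, show 2*(3*x) + 3*x = 9*x by ring] at h
    exact h
  have eB : sin (4*x) * sin (5*x) = (cos x - cos (9*x))/2 := by
    have h := pts2 (4*x) x
    rw [show 4*x + x = 5*x by ring, show 2*(4*x) + x = 9*x by ring] at h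
    exact h
  have e1 : sin (6*x) = 2 * sin (3*x) * cos (3*x) := by
    have h := Real.sin_two_mul (3*x)
    rw [show 2*(3*x) = 6*x by ring] at h
    exact h
  have e2 : sin (2*x) = 2 * sin x * cos x := Real.sin_two_mul x
  have e3 : sin (3*x) - sin x = 2 * sin x * cos (2*x) := by
    have h := Real.sin_sub_sin (3*x) x
    rw [show (3*x - x)/2 = x by ring, show (3*x + x)/2 = 2*x by ring] at h
    exact h
  have e4 : sin (6*x) - sin (2*x) = 2 * sin (2*x) * cos (4*x) := by
    have h := Real.sin_sub_sin (6*x) (2*x)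
    rw [show (6*x - 2*x)/2 = 2*x by ring, show (6*x + 2*x)/2 = 4*x by ring] at h
    exact h
  have key : sin (3*x) * (cos (3*x) - cos (9*x)) - sin x * (cos x - cos (9*x))
      = 2 * sin x * (cos x * cos (4*x) - cos (2*x) * cos (9*x)) := by
    linear_combination e4/2 - cos (9*x) * e3 - e1/2 + e2/2 + cos (4*x) * e2
  have c2pos : 0 < cos (2*x) := Real.cos_pos_of_mem_Ioo ⟨by linarith, by linarith⟩
  have c4pos : 0 < cos (4*x) := Real.cos_pos_of_mem_Ioo ⟨by linarith, by linarith⟩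
  have h94 : cos (9*x) < cos (4*x) :=
    Real.cos_lt_cos_of_nonneg_of_le_pi (by positivity) (by linarith) (by linarith)
  have h12 : cos (2*x) < cos x :=
    Real.cos_lt_cos_of_nonneg_of_le_pi (by positivity) (by linarith) (by linarith)
  have pos : 0 < cos x * cos (4*x) - cos (2*x) * cos (9*x) := by
    nlinarith [mul_lt_mul_of_pos_left h94 c2pos, mul_lt_mul_of_pos_right h12 c4pos]
  have s1 : 0 < sin x := by
    have := sposk hx hx15 (k := 1) (by norm_num) (by norm_num); simpa using this
  have s3 : 0 < sin (3*x) := sposk hx hx15 (by norm_num) (by norm_num)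
  have strict : sin x * (sin (4*x) * sin (5*x)) < sin (3*x) * (sin (3*x) * sin (6*x)) := by
    rw [eA, eB]
    nlinarith [key, mul_pos s1 pos]
  calc sin x * sin (4*x) * sin (5*x) = sin x * (sin (4*x) * sin (5*x)) := by ring
    _ < sin (3*x) * (sin (3*x) * sin (6*x)) := strict
    _ ≤ sin (3*x) * (sin β * sin (β + 3*x)) := mul_le_mul_of_nonneg_left m s3.le

lemma caseA5 {A B C : ℝ} (hA : 5*x ≤ A) (hAB : A ≤ B) (hBC : B ≤ C)
    (hsum : A + B + C = π) :
    sin x * sin (4*x) * sin (5*x) < sin A * sin B * sin C := by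
  have hπ := Real.pi_pos
  have sA : sin (5*x) ≤ sin A := sin_ge_arc (by positivity) hA (by linarith)
  have sB : sin (5*x) ≤ sin B := sin_ge_arc (by positivity) (by linarith) (by linarith)
  have sC : sin (4*x) ≤ sin C := sin_ge_arc (by positivity) (by linarith) (by linarith)
  have s4 : 0 < sin (4*x) := sposk hx hx15 (by norm_num) (by norm_num)
  have s5 : 0 < sin (5*x) := sposk hx hx15 (by norm_num) (by norm_num)
  have strict : sin x < sin (5*x) :=
    Real.sin_lt_sin_of_lt_of_le_pi_div_two (by linarith) (by linarith) (by linarith)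
  have step : sin (5*x) * sin (5*x) * sin (4*x) ≤ sin A * sin B * sin C := by
    apply mul_le_mul (mul_le_mul sA sB s5.le (by linarith)) sC s4.le
    exact mul_nonneg (by linarith) (by linarith)
  nlinarith [mul_pos s4 s5]

end Cases


lemma sorted_main {x : ℝ} (n : ℕ) (hx : 0 < x) (hpin : (n:ℝ) * x = π) (hn : 15 ≤ n)
    (a b c : ℤ) (ha : 1 ≤ a) (hab : a ≤ b) (hbc : b ≤ c) (hsum : a + b + c = (n:ℤ))
    (hmod : (3:ℤ) ∣ b - a)
    (h11 : ¬(a = 1 ∧ b = 1)) (h22 : ¬(a = 2 ∧ b = 2)) (h14 : ¬(a = 1 ∧ b = 4)) :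
    sin x * sin (4*x) * sin (5*x) <
      sin ((a:ℝ)*x) * sin ((b:ℝ)*x) * sin ((c:ℝ)*x) := by
  have hπ := Real.pi_pos
  have hx15 : 15 * x ≤ π := by
    have h15 : (15:ℝ) ≤ (n:ℝ) := by exact_mod_cast hn
    nlinarith
  have hsumR : (a:ℝ) + (b:ℝ) + (c:ℝ) = (n:ℝ) := by exact_mod_cast hsum
  have hCx : (c:ℝ)*x = π - ((a:ℝ)*x + (b:ℝ)*x) := by
    rw [← hpin]; linear_combination x * hsumR
  have hsinC : sin ((c:ℝ)*x) = sin ((a:ℝ)*x + (b:ℝ)*x) := by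
    rw [hCx, Real.sin_pi_sub]
  -- generic cap facts
  have hble : ∀ m : ℤ, m ≤ (n:ℤ) → (m:ℝ) * x ≤ π := by
    intro m hm
    rw [← hpin]
    have : (m:ℝ) ≤ (n:ℝ) := by exact_mod_cast hm
    nlinarith
  have hbx : ∀ m : ℤ, m ≤ b → (m:ℝ) * x ≤ (b:ℝ) * x := by
    intro m hm
    have : (m:ℝ) ≤ (b:ℝ) := by exact_mod_cast hm
    nlinarith
  rcases (by omega : a = 1 ∨ a = 2 ∨ a = 3 ∨ a = 4 ∨ 5 ≤ a) with h|h|h|h|h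
  · -- a = 1
    subst h
    have hb : (7:ℤ) ≤ b := by omega
    have hcap : 2*((b:ℝ)*x) + x ≤ π := by
      have h1 := hble (2*b+1) (by omega)
      push_cast at h1
      linarith
    have hβ : 7*x ≤ (b:ℝ)*x := by have := hbx 7 hb; push_cast at this; linarith
    have := caseA1 hx hx15 hβ hcap
    rw [hsinC]
    push_cast
    calc sin x * sin (4*x) * sin (5*x) < sin x * (sin ((b:ℝ)*x) * sin ((b:ℝ)*x + x)) := this
      _ = sin (1*x) * sin ((b:ℝ)*x) * sin (1*x + (b:ℝ)*x) := by
            rw [show (b:ℝ)*x + x = 1*x + (b:ℝ)*x by ring, one_mul]; ring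
  · -- a = 2
    subst h
    have hb : (5:ℤ) ≤ b := by omega
    have hcap : 2*((b:ℝ)*x) + 2*x ≤ π := by
      have h1 := hble (2*b+2) (by omega)
      push_cast at h1
      linarith
    have hβ : 5*x ≤ (b:ℝ)*x := by have := hbx 5 hb; push_cast at this; linarith
    have := caseA2 hx hx15 hβ hcap
    rw [hsinC]
    push_cast
    calc sin x * sin (4*x) * sin (5*x) < sin (2*x) * (sin ((b:ℝ)*x) * sin ((b:ℝ)*x + 2*x)) := this
      _ = sin (2*x) * sin ((b:ℝ)*x) * sin (2*x + (b:ℝ)*x) := by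
            rw [show (b:ℝ)*x + 2*x = 2*x + (b:ℝ)*x by ring]; ring
  · -- a = 3
    subst h
    have hb : (3:ℤ) ≤ b := by omega
    have hcap : 2*((b:ℝ)*x) + 3*x ≤ π := by
      have h1 := hble (2*b+3) (by omega)
      push_cast at h1
      linarith
    have hβ : 3*x ≤ (b:ℝ)*x := by have := hbx 3 hb; push_cast at this; linarith
    have := caseA3 hx hx15 hβ hcap
    rw [hsinC]
    push_cast
    calc sin x * sin (4*x) * sin (5*x) < sin (3*x) * (sin ((b:ℝ)*x) * sin ((b:ℝ)*x + 3*x)) := this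
      _ = sin (3*x) * sin ((b:ℝ)*x) * sin (3*x + (b:ℝ)*x) := by
            rw [show (b:ℝ)*x + 3*x = 3*x + (b:ℝ)*x by ring]; ring
  · -- a = 4
    subst h
    have hb : (4:ℤ) ≤ b := by omega
    have hcap : 2*((b:ℝ)*x) + 4*x ≤ π := by
      have h1 := hble (2*b+4) (by omega)
      push_cast at h1
      linarith
    have hβ : 4*x ≤ (b:ℝ)*x := by have := hbx 4 hb; push_cast at this; linarith
    have := caseA4 hx hx15 hβ hcap
    rw [hsinC]
    push_cast
    calc sin x * sin (4*x) * sin (5*x) < sin (4*x) * (sin ((b:ℝ)*x) * sin ((b:ℝ)*x + 4*x)) := this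
      _ = sin (4*x) * sin ((b:ℝ)*x) * sin (4*x + (b:ℝ)*x) := by
            rw [show (b:ℝ)*x + 4*x = 4*x + (b:ℝ)*x by ring]; ring
  · -- 5 ≤ a
    have hA : 5*x ≤ (a:ℝ)*x := by
      have : (5:ℝ) ≤ (a:ℝ) := by exact_mod_cast h
      nlinarith
    have hAB : (a:ℝ)*x ≤ (b:ℝ)*x := by
      have : (a:ℝ) ≤ (b:ℝ) := by exact_mod_cast hab
      nlinarith
    have hBC : (b:ℝ)*x ≤ (c:ℝ)*x := by
      have : (b:ℝ) ≤ (c:ℝ) := by exact_mod_cast hbc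
      nlinarith
    have hsum' : (a:ℝ)*x + (b:ℝ)*x + (c:ℝ)*x = π := by
      rw [← hpin]; linear_combination x * hsumR
    exact caseA5 hx hx15 hA hAB hBC hsum'

lemma main_num {x : ℝ} (n : ℕ) (hx : 0 < x) (hpin : (n:ℝ) * x = π) (hn : 15 ≤ n)
    (p q r : ℤ) (hp : 1 ≤ p) (hq : 1 ≤ q) (hr : 1 ≤ r) (hsum : p + q + r = (n:ℤ))
    (hqp : (3:ℤ) ∣ q - p) (hrq : (3:ℤ) ∣ r - q)
    (g1 : ¬(p = 1 ∧ q = 1)) (g2 : ¬(p = 1 ∧ q = (n:ℤ)-2)) (g3 : ¬(p = (n:ℤ)-2 ∧ q = 1))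
    (g4 : ¬(p = 2 ∧ q = 2)) (g5 : ¬(p = 2 ∧ q = (n:ℤ)-4)) (g6 : ¬(p = (n:ℤ)-4 ∧ q = 2))
    (g7 : ¬(p = 4 ∧ q = 1)) (g8 : ¬(p = 1 ∧ q = 4)) (g9 : ¬(p = 1 ∧ q = (n:ℤ)-5))
    (g10 : ¬(p = (n:ℤ)-5 ∧ q = 1)) (g11 : ¬(p = 4 ∧ q = (n:ℤ)-5))
    (g12 : ¬(p = (n:ℤ)-5 ∧ q = 4)) :
    sin x * sin (4*x) * sin (5*x) <
      sin ((p:ℝ)*x) * sin ((q:ℝ)*x) * sin ((r:ℝ)*x) := by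
  obtain ⟨u, hu⟩ := hqp
  obtain ⟨v, hv⟩ := hrq
  rcases le_total p q with h1 | h1 <;> rcases le_total q r with h2 | h2 <;>
    rcases le_total p r with h3 | h3
  · exact lt_of_lt_of_eq (sorted_main n hx hpin hn p q r hp h1 h2 hsum ⟨u, hu⟩
      g1 g4 g8) (by ring)
  · exact lt_of_lt_of_eq (sorted_main n hx hpin hn p q r hp h1 h2 hsum ⟨u, hu⟩
      g1 g4 g8) (by ring)
  · exact lt_of_lt_of_eq (sorted_main n hx hpin hn p r q hp h3 h2 (by linarith)
      ⟨u + v, by linarith⟩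
      (fun ⟨e, f⟩ => g2 ⟨e, by linarith⟩) (fun ⟨e, f⟩ => g5 ⟨e, by linarith⟩)
      (fun ⟨e, f⟩ => g9 ⟨e, by linarith⟩)) (by ring)
  · exact lt_of_lt_of_eq (sorted_main n hx hpin hn r p q hr h3 h1 (by linarith)
      ⟨-u - v, by linarith⟩
      (fun ⟨e, f⟩ => g2 ⟨f, by linarith⟩) (fun ⟨e, f⟩ => g5 ⟨f, by linarith⟩)
      (fun ⟨e, f⟩ => g11 ⟨f, by linarith⟩)) (by ring)
  · exact lt_of_lt_of_eq (sorted_main n hx hpin hn q p r hq h1 h3 (by linarith)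
      ⟨-u, by linarith⟩
      (fun ⟨e, f⟩ => g1 ⟨f, e⟩) (fun ⟨e, f⟩ => g4 ⟨f, e⟩)
      (fun ⟨e, f⟩ => g7 ⟨f, e⟩)) (by ring)
  · exact lt_of_lt_of_eq (sorted_main n hx hpin hn q r p hq h2 h3 (by linarith)
      ⟨v, hv⟩
      (fun ⟨e, f⟩ => g3 ⟨by linarith, e⟩) (fun ⟨e, f⟩ => g6 ⟨by linarith, e⟩)
      (fun ⟨e, f⟩ => g10 ⟨by linarith, e⟩)) (by ring)
  · exact lt_of_lt_of_eq (sorted_main n hx hpin hn p q r hp (by linarith) (by linarith)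
      hsum ⟨u, hu⟩ g1 g4 g8) (by ring)
  · exact lt_of_lt_of_eq (sorted_main n hx hpin hn r q p hr h2 h1 (by linarith)
      ⟨-v, by linarith⟩
      (fun ⟨e, f⟩ => g3 ⟨by linarith, f⟩) (fun ⟨e, f⟩ => g6 ⟨by linarith, f⟩)
      (fun ⟨e, f⟩ => g12 ⟨by linarith, f⟩)) (by ring)

end SU3Aux


namespace SU3Aux
section Cases
variable {x : ℝ} (hx : 0 < x) (hx15 : 15 * x ≤ π)
include hx hx15

lemma ineqB : sin (2*x) * sin (2*x) * sin (4*x) < sin x * sin (4*x) * sin (5*x) := by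
  have hπ := Real.pi_pos
  have e1 : sin x * sin (5*x) = (cos (4*x) - cos (6*x))/2 := by
    have h := pts2 x (4*x)
    rw [show x + 4*x = 5*x by ring, show 2*x + 4*x = 6*x by ring] at h
    exact h
  have e2 : sin (2*x) * sin (2*x) = (1 - cos (4*x))/2 := by
    have h := pts2 (2*x) 0
    rw [add_zero, show 2*(2*x) + 0 = 4*x by ring, Real.cos_zero] at h
    exact h
  have f2 : cos (2*x) = 1 - 2 * sin x ^ 2 := by
    have h := Real.cos_two_mul x
    have h2 := Real.sin_sq_add_cos_sq x
    linarith
  have f1 : cos (6*x) + cos (2*x) = 2 * cos (4*x) * cos (2*x) := by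
    have h := Real.cos_add_cos (6*x) (2*x)
    rw [show (6*x + 2*x)/2 = 4*x by ring, show (6*x - 2*x)/2 = 2*x by ring] at h
    exact h
  have key : sin x * sin (5*x) - sin (2*x) * sin (2*x)
      = sin x ^ 2 * (2 * cos (4*x) - 1) := by
    linear_combination e1 - e2 - f1/2 + (1/2 - cos (4*x)) * f2
  have pos : (1:ℝ)/2 < cos (4*x) := by
    have h := Real.cos_lt_cos_of_nonneg_of_le_pi (by positivity : (0:ℝ) ≤ 4*x)
      (by linarith : π/3 ≤ π) (by linarith : 4*x < π/3)
    rw [Real.cos_pi_div_three] at h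
    linarith
  have s1 : 0 < sin x := by
    have := sposk hx hx15 (k := 1) (by norm_num) (by norm_num); simpa using this
  have s4 : 0 < sin (4*x) := sposk hx hx15 (by norm_num) (by norm_num)
  have hd : 0 < sin x * sin (5*x) - sin (2*x) * sin (2*x) := by
    rw [key]
    exact mul_pos (pow_pos s1 2) (by linarith)
  nlinarith [mul_pos hd s4]

lemma ineqC : sin x * sin x * sin (2*x) < sin (2*x) * sin (2*x) * sin (4*x) := by
  have hπ := Real.pi_pos
  have s1 : 0 < sin x := by
    have := sposk hx hx15 (k := 1) (by norm_num) (by norm_num); simpa using this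
  have s2 : 0 < sin (2*x) := sposk hx hx15 (by norm_num) (by norm_num)
  have h12 : sin x < sin (2*x) :=
    Real.sin_lt_sin_of_lt_of_le_pi_div_two (by linarith) (by linarith) (by linarith)
  have h14 : sin x < sin (4*x) :=
    Real.sin_lt_sin_of_lt_of_le_pi_div_two (by linarith) (by linarith) (by linarith)
  nlinarith [mul_lt_mul'' h12 h14 s1.le s1.le, mul_pos s1 s1]

end Cases
end SU3Aux

theorem statement12 (n : ℕ) (hn : 12 < n) (h3 : 3 ∣ n) :
    ∀ mu ∈ Phi3 n, (3 : ℤ) ∣ tri mu →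
      mu ∉ orbCJ n (4, 1) ∪ orbJ n (2, 2) ∪ orbJ n (1, 1) →
        qdim n mu > qdim n (4, 1) ∧ qdim n (4, 1) > qdim n (2, 2) ∧ qdim n (2, 2) > 1 := by
  have hπ := Real.pi_pos
  have hn15 : 15 ≤ n := by omega
  intro mu hmu htri hnot
  obtain ⟨p, q⟩ := mu
  simp only [Phi3, Finset.mem_filter, Finset.mem_Icc, Prod.mk_le_mk] at hmu
  simp only [tri] at htri
  simp only [orbCJ, orbJ, Jv, Cv, Finset.mem_union, Finset.mem_insert,
    Finset.mem_singleton, Prod.mk.injEq] at hnot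
  push_neg at hnot
  obtain ⟨⟨⟨⟨a41, a54, a15⟩, a14, a51, a45⟩, b22, b52, b25⟩, c11, c21, c12⟩ := hnot
  obtain ⟨⟨⟨hp1, hq1⟩, -, -⟩, hpq⟩ := hmu
  -- set up x
  set x : ℝ := π / n with hxdef
  have hn0 : (0:ℝ) < (n:ℝ) := by positivity
  have hx : 0 < x := by positivity
  have hpin : (n:ℝ) * x = π := by rw [hxdef]; field_simp
  have hx15 : 15 * x ≤ π := by
    rw [← hpin]
    have : (15:ℝ) ≤ (n:ℝ) := by exact_mod_cast hn15
    nlinarith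
  set r : ℤ := (n:ℤ) - p - q with hrdef
  have hr1 : 1 ≤ r := by omega
  have hsum : p + q + r = (n:ℤ) := by omega
  have h3' : (3:ℤ) ∣ (n:ℤ) := Int.natCast_dvd_natCast.mpr h3
  have hqp : (3:ℤ) ∣ q - p := by omega
  have hrq : (3:ℤ) ∣ r - q := by omega
  -- denominator
  have hD : 0 < Real.sin (π / (n:ℝ)) ^ 2 * Real.sin (2 * π / (n:ℝ)) := by
    have h1 : 0 < Real.sin x := by
      have := SU3Aux.sposk hx hx15 (k := 1) (by norm_num) (by norm_num)
      simpa using this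
    have h2 : 0 < Real.sin (2*x) := SU3Aux.sposk hx hx15 (by norm_num) (by norm_num)
    rw [show 2 * π / (n:ℝ) = 2 * x by rw [hxdef]; ring]
    rw [show π / (n:ℝ) = x from rfl]
    exact mul_pos (pow_pos h1 2) h2
  -- numerators
  have hq41 : qdim n (4, 1) = Real.sin x * Real.sin (4*x) * Real.sin (5*x) /
      (Real.sin (π / (n:ℝ)) ^ 2 * Real.sin (2 * π / (n:ℝ))) := by
    simp only [qdim]
    norm_num
    rw [show π * 4 / (n:ℝ) = 4*x by rw [hxdef]; ring, show π * 5 / (n:ℝ) = 5*x by rw [hxdef]; ring,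
      show π / (n:ℝ) = x from rfl]
    all_goals ring
  have hq22 : qdim n (2, 2) = Real.sin (2*x) * Real.sin (2*x) * Real.sin (4*x) /
      (Real.sin (π / (n:ℝ)) ^ 2 * Real.sin (2 * π / (n:ℝ))) := by
    simp only [qdim]
    norm_num
    rw [show π * 2 / (n:ℝ) = 2*x by rw [hxdef]; ring, show π * 4 / (n:ℝ) = 4*x by rw [hxdef]; ring]
    all_goals ring
  have hqmu : qdim n (p, q) = Real.sin ((p:ℝ)*x) * Real.sin ((q:ℝ)*x) * Real.sin ((r:ℝ)*x) /
      (Real.sin (π / (n:ℝ)) ^ 2 * Real.sin (2 * π / (n:ℝ))) := by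
    simp only [qdim]
    have hrR : (p:ℝ) + (q:ℝ) + (r:ℝ) = (n:ℝ) := by exact_mod_cast hsum
    have h1 : π * (p:ℝ) / n = (p:ℝ) * x := by rw [hxdef]; ring
    have h2 : π * (q:ℝ) / n = (q:ℝ) * x := by rw [hxdef]; ring
    have h3 : π * ((p:ℝ) + (q:ℝ)) / n = π - (r:ℝ) * x := by
      have hpq' : (p:ℝ) + (q:ℝ) = (n:ℝ) - (r:ℝ) := by linarith
      rw [hpq', hxdef]
      field_simp
    rw [h1, h2, h3, Real.sin_pi_sub]
  have num1 : Real.sin x * Real.sin (4*x) * Real.sin (5*x) <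
      Real.sin ((p:ℝ)*x) * Real.sin ((q:ℝ)*x) * Real.sin ((r:ℝ)*x) := by
    apply SU3Aux.main_num n hx hpin hn15 p q r hp1 hq1 hr1 hsum hqp hrq
    · exact fun ⟨e, f⟩ => c11 e f
    · exact fun ⟨e, f⟩ => c12 (by linarith) (by linarith)
    · exact fun ⟨e, f⟩ => c21 (by linarith) (by linarith)
    · exact fun ⟨e, f⟩ => b22 e f
    · exact fun ⟨e, f⟩ => b25 (by linarith) (by linarith)
    · exact fun ⟨e, f⟩ => b52 (by linarith) (by linarith)
    · exact fun ⟨e, f⟩ => a41 e f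
    · exact fun ⟨e, f⟩ => a14 e f
    · exact fun ⟨e, f⟩ => a15 (by linarith) (by linarith)
    · exact fun ⟨e, f⟩ => a51 (by linarith) (by linarith)
    · exact fun ⟨e, f⟩ => a45 (by linarith) (by linarith)
    · exact fun ⟨e, f⟩ => a54 (by linarith) (by linarith)
  have num2 := SU3Aux.ineqB hx hx15
  have num3 := SU3Aux.ineqC hx hx15
  refine ⟨?_, ?_, ?_⟩
  · rw [gt_iff_lt, hq41, hqmu, div_lt_div_iff₀ hD hD]
    exact mul_lt_mul_of_pos_right num1 hD
  · rw [gt_iff_lt, hq22, hq41, div_lt_div_iff₀ hD hD]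
    exact mul_lt_mul_of_pos_right num2 hD
  · rw [gt_iff_lt, hq22, lt_div_iff₀ hD, one_mul]
    calc Real.sin (π / (n:ℝ)) ^ 2 * Real.sin (2 * π / (n:ℝ))
        = Real.sin x * Real.sin x * Real.sin (2*x) := by
          rw [show 2 * π / (n:ℝ) = 2*x by rw [hxdef]; ring, show π / (n:ℝ) = x from rfl]; ring
      _ < Real.sin (2*x) * Real.sin (2*x) * Real.sin (4*x) := num3
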